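/- Let R be an ℕ-graded commutative ring generated in degree one over R₀, with Krull dimension at least 2, and let f ∈ R₁ be nonzero. Then there exists g ∈ R₁ that does not lie in the radical of the ideal fR. -/

import Mathlib

set_option maxHeartbeats 1000000

section Aux
variable {k R : Type*} [Field k] [CommRing R] [Algebra k R]
  (𝒜 : ℕ → Submodule k R) [GradedAlgebra 𝒜]

lemma pow_le_piece : ∀ (n : ℕ) (x : R), x ∈ (𝒜 1) ^ n → x ∈ 𝒜 n := by
  intro n
  induction n with
  | zero =>
    intro x hx
    rw [pow_zero, Submodule.one_eq_span] at hx
    obtain ⟨c, rfl⟩ := Submodule.mem_span_singleton.mp hx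
    exact Submodule.smul_mem _ _ (SetLike.one_mem_graded 𝒜)
  | succ n ih =>
    intro x hx
    rw [pow_succ] at hx
    refine Submodule.mul_le.mpr (fun m hm c hc => ?_) hx
    exact SetLike.mul_mem_graded (ih m hm) hc

lemma piece_eq_pow (hgen : Algebra.adjoin k (𝒜 1 : Set R) = ⊤) :
    ∀ (n : ℕ) (x : R), x ∈ 𝒜 n → x ∈ (𝒜 1) ^ n := by
  classical
  have key : ∀ x ∈ Submonoid.closure (𝒜 1 : Set R), ∃ i, x ∈ (𝒜 1) ^ i := by
    intro x hx
    induction hx using Submonoid.closure_induction with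
    | mem y hy => exact ⟨1, by rwa [pow_one]⟩
    | one =>
      refine ⟨0, ?_⟩
      rw [pow_zero, Submodule.one_eq_span]
      exact Submodule.mem_span_singleton_self 1
    | mul a b _ _ iha ihb =>
      obtain ⟨i, hi⟩ := iha
      obtain ⟨j, hj⟩ := ihb
      exact ⟨i + j, by rw [pow_add]; exact Submodule.mul_mem_mul hi hj⟩
  have hsup : (⊤ : Submodule k R) ≤ ⨆ i : ℕ, (𝒜 1) ^ i := by
    rw [← Algebra.top_toSubmodule, ← hgen, Algebra.adjoin_eq_span, Submodule.span_le]
    intro x hx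
    obtain ⟨i, hi⟩ := key x hx
    exact Submodule.mem_iSup_of_mem i hi
  intro n x hx
  have hx' : x ∈ ⨆ i : ℕ, (𝒜 1) ^ i := hsup Submodule.mem_top
  rw [Submodule.mem_iSup_iff_exists_finsupp] at hx'
  obtain ⟨c, hc, hsum⟩ := hx'
  have hproj : x = ((DirectSum.decompose 𝒜 x n : 𝒜 n) : R) :=
    (DirectSum.decompose_of_mem_same 𝒜 hx).symm
  have hd : ((DirectSum.decompose 𝒜 x n : 𝒜 n) : R) = c n := by
    rw [← hsum]
    rw [Finsupp.sum]
    have : ∀ g : R, ((DirectSum.decompose 𝒜 g n : 𝒜 n) : R) = GradedRing.proj 𝒜 n g := by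
      intro g; rw [GradedRing.proj_apply]
    rw [this, map_sum]
    rw [Finset.sum_eq_single n]
    · rw [GradedRing.proj_apply, DirectSum.decompose_of_mem_same]
      exact pow_le_piece 𝒜 n _ (hc n)
    · intro b _ hbn
      rw [GradedRing.proj_apply, DirectSum.decompose_of_mem_ne 𝒜 (pow_le_piece 𝒜 b _ (hc b)) hbn]
    · intro hn
      rw [Finsupp.notMem_support_iff.mp hn, map_zero]
  rw [hproj, hd]
  exact hc n
end Aux

section Aux2
variable {k R : Type*} [Field k] [CommRing R] [Algebra k R]
  (𝒜 : ℕ → Submodule k R) [GradedAlgebra 𝒜]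

lemma pow_le_ideal_pow : ∀ (n : ℕ) (x : R), x ∈ (𝒜 1) ^ n →
    x ∈ (Ideal.span (𝒜 1 : Set R)) ^ n := by
  intro n
  induction n with
  | zero => intro x _; simp [Ideal.one_eq_top]
  | succ n ih =>
    intro x hx
    rw [pow_succ] at hx
    suffices h : (𝒜 1 ^ n * 𝒜 1 : Submodule k R) ≤
        Submodule.restrictScalars k ((Ideal.span (𝒜 1 : Set R)) ^ (n+1)) from h hx
    refine Submodule.mul_le.mpr fun m hm c hc => ?_
    rw [Submodule.restrictScalars_mem, pow_succ]
    exact Ideal.mul_mem_mul (ih m hm) (Ideal.subset_span hc)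

/-- division lemma: in high degrees, every homogeneous element is divisible by f -/
lemma div_lemma (hgen : Algebra.adjoin k (𝒜 1 : Set R) = ⊤)
    {f : R} (hf : f ∈ 𝒜 1) {N : ℕ}
    (hN : (Ideal.span (𝒜 1 : Set R)) ^ N ≤ Ideal.span {f})
    {m : ℕ} (hm : N ≤ m + 1) {x : R} (hx : x ∈ 𝒜 (m + 1)) :
    ∃ y ∈ 𝒜 m, x = f * y := by
  have h1 : x ∈ (Ideal.span (𝒜 1 : Set R)) ^ (m + 1) :=
    pow_le_ideal_pow 𝒜 _ x (piece_eq_pow 𝒜 hgen _ x hx)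
  have h2 : x ∈ Ideal.span {f} := hN (Ideal.pow_le_pow_right hm h1)
  obtain ⟨y', hy'⟩ := Ideal.mem_span_singleton'.mp h2
  refine ⟨(DirectSum.decompose 𝒜 y' m : 𝒜 m), SetLike.coe_mem _, ?_⟩
  have hx1 : x ∈ 𝒜 (1 + m) := by rwa [add_comm]
  calc x = ((DirectSum.decompose 𝒜 (f * y') (1 + m) : 𝒜 (1+m)) : R) := by
        rw [← hy', mul_comm]; exact (DirectSum.decompose_of_mem_same 𝒜 (by rwa [← hy', mul_comm] at hx1)).symm
    _ = f * ((DirectSum.decompose 𝒜 y' m : 𝒜 m) : R) :=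
        DirectSum.coe_decompose_mul_add_of_left_mem 𝒜 hf
end Aux2

section Aux3
variable {k R : Type*} [Field k] [CommRing R] [IsNoetherianRing R] [Algebra k R]
  (𝒜 : ℕ → Submodule k R) [GradedAlgebra 𝒜]

lemma exists_finset_span (hgen : Algebra.adjoin k (𝒜 1 : Set R) = ⊤) :
    ∃ s : Finset R, (↑s : Set R) ⊆ (𝒜 1 : Set R) ∧
      (𝒜 1 : Submodule k R) ≤ Submodule.span k (↑s : Set R) := by
  classical
  have hfg : (Ideal.span (𝒜 1 : Set R)).FG := IsNoetherian.noetherian _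
  have hcomp := (Submodule.fg_iff_compact _).mp hfg
  have hle : Ideal.span (𝒜 1 : Set R) ≤
      ⨆ x : (𝒜 1 : Set R), Ideal.span {(x : R)} := by
    rw [Ideal.span_le]
    intro y hy
    exact Submodule.mem_iSup_of_mem ⟨y, hy⟩
      (Ideal.subset_span (Set.mem_singleton _))
  obtain ⟨t, ht⟩ := CompleteLattice.IsCompactElement.exists_finset_of_le_iSup _ hcomp
    (fun x : (𝒜 1 : Set R) => Ideal.span {(x : R)}) hle
  set s : Finset R := t.image Subtype.val with hsdef
  have hsub : (↑s : Set R) ⊆ (𝒜 1 : Set R) := by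
    intro y hy
    rw [hsdef, Finset.coe_image] at hy
    obtain ⟨z, -, rfl⟩ := hy
    exact z.2
  refine ⟨s, hsub, ?_⟩
  intro x hx
  have hx' : x ∈ Ideal.span (↑s : Set R) := by
    refine le_trans ht ?_ (Ideal.subset_span hx)
    refine iSup₂_le fun y hy => ?_
    rw [Ideal.span_le, Set.singleton_subset_iff]
    refine Ideal.subset_span ?_
    rw [hsdef, Finset.coe_image]
    exact ⟨y, hy, rfl⟩
  rw [Ideal.span, Submodule.mem_span_finset] at hx'
  obtain ⟨c, -, hsum⟩ := hx'
  have hx1 : x = ((DirectSum.decompose 𝒜 x 1 : 𝒜 1) : R) :=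
    (DirectSum.decompose_of_mem_same 𝒜 hx).symm
  have key : ((DirectSum.decompose 𝒜 x 1 : 𝒜 1) : R) ∈ Submodule.span k (↑s : Set R) := by
    rw [← hsum]
    have hrw : ∀ g : R, ((DirectSum.decompose 𝒜 g 1 : 𝒜 1) : R) = GradedRing.proj 𝒜 1 g := by
      intro g; rw [GradedRing.proj_apply]
    rw [hrw, map_sum]
    refine Submodule.sum_mem _ fun i hi => ?_
    rw [← hrw, smul_eq_mul]
    have h01 : (0 : ℕ) + 1 = 1 := by norm_num
    have hmul := DirectSum.coe_decompose_mul_add_of_right_mem 𝒜 (hsub hi) (a := c i) (i := 0)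
    rw [h01] at hmul
    rw [hmul]
    have h0 : ((DirectSum.decompose 𝒜 (c i) 0 : 𝒜 0) : R) ∈ (𝒜 1 : Submodule k R) ^ 0 :=
      piece_eq_pow 𝒜 hgen 0 _ (SetLike.coe_mem _)
    rw [pow_zero, Submodule.one_eq_span] at h0
    obtain ⟨a, ha⟩ := Submodule.mem_span_singleton.mp h0
    rw [← ha, smul_mul_assoc, one_mul]
    exact Submodule.smul_mem _ _ (Submodule.subset_span (Finset.mem_coe.mpr hi))
  rwa [← hx1] at key
end Aux3

open scoped Pointwise

theorem stmt_11 (k R : Type*) [Field k] [CommRing R] [IsNoetherianRing R]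
    [Algebra k R] (𝒜 : ℕ → Submodule k R) [GradedAlgebra 𝒜]
    (hgen : Algebra.adjoin k (𝒜 1 : Set R) = ⊤)
    (hdim : 2 ≤ ringKrullDim R)
    (f : R) (hf : f ∈ 𝒜 1) (hf0 : f ≠ 0) :
    ∃ g ∈ 𝒜 1, g ∉ (Ideal.span {f}).radical := by
  classical
  by_contra hcon
  push_neg at hcon
  have hJrad : Ideal.span (𝒜 1 : Set R) ≤ (Ideal.span {f}).radical :=
    Ideal.span_le.mpr hcon
  obtain ⟨N, hN⟩ := Ideal.exists_pow_le_of_le_radical_of_fg hJrad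
    (IsNoetherian.noetherian _)
  obtain ⟨s, hsub, hspan⟩ := exists_finset_span 𝒜 hgen
  set A : Subalgebra k R := (Polynomial.aeval (R := k) f).range with hA
  have hfA : f ∈ A := ⟨Polynomial.X, Polynomial.aeval_X f⟩
  set G : Finset R := (Finset.range (N + 1)).biUnion (fun i => s ^ i) with hG
  -- every graded piece is in the A-span of G
  have key : ∀ n, ∀ x ∈ 𝒜 n, x ∈ Submodule.span A (↑G : Set R) := by
    have base : ∀ n, n ≤ N → ∀ x ∈ 𝒜 n, x ∈ Submodule.span A (↑G : Set R) := by
      intro n hn x hx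
      have h1 : x ∈ (𝒜 1 : Submodule k R) ^ n := piece_eq_pow 𝒜 hgen n x hx
      have h2 : (𝒜 1 : Submodule k R) ^ n ≤ (Submodule.span k (↑s : Set R)) ^ n :=
        pow_le_pow_left' hspan n
      have h3 : x ∈ Submodule.span k ((↑s : Set R) ^ n) := by
        rw [← Submodule.span_pow]; exact h2 h1
      have h4 : x ∈ Submodule.span k (↑(s ^ n) : Set R) := by
        rwa [Finset.coe_pow]
      have h5 : x ∈ Submodule.span A (↑(s ^ n) : Set R) :=
        Submodule.span_le_restrictScalars k A _ h4
      refine Submodule.span_mono ?_ h5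
      intro y hy
      rw [Finset.mem_coe] at hy ⊢
      exact Finset.mem_biUnion.mpr ⟨n, Finset.mem_range.mpr (by omega), hy⟩
    intro n
    induction n with
    | zero => exact base 0 (Nat.zero_le N)
    | succ n ih =>
      intro x hx
      by_cases hle : n + 1 ≤ N
      · exact base (n + 1) hle x hx
      · obtain ⟨y, hy, rfl⟩ := div_lemma 𝒜 hgen hf hN (by omega) hx
        have : f * y = (⟨f, hfA⟩ : A) • y := rfl
        rw [this]
        exact Submodule.smul_mem _ _ (ih y hy)
  have htop : Submodule.span A (↑G : Set R) = ⊤ := by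
    rw [eq_top_iff]
    intro x _
    rw [← DirectSum.sum_support_decompose 𝒜 x]
    exact Submodule.sum_mem _ fun i _ => key i _ (SetLike.coe_mem _)
  letI : Module.Finite A R := ⟨⟨G, htop⟩⟩
  have hint : ∀ x : R, IsIntegral A x := fun x => IsIntegral.of_finite A x
  -- extract a chain of primes of length 2
  have hchain : ∃ p : LTSeries (PrimeSpectrum R), 2 ≤ p.length := by
    by_contra hc
    push_neg at hc
    have hle1 : ringKrullDim R ≤ 1 := by
      rw [ringKrullDim, Order.krullDim]
      refine iSup_le fun p => ?_
      have := Nat.lt_succ_iff.mp (hc p)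
      exact_mod_cast this
    have : (2 : WithBot (WithTop ℕ)) ≤ 1 := le_trans hdim hle1
    norm_num at this
  obtain ⟨p, hp⟩ := hchain
  set P0 := p ⟨0, by omega⟩ with hP0
  set P1 := p ⟨1, by omega⟩ with hP1
  set P2 := p ⟨2, by omega⟩ with hP2
  have h01 : P0.asIdeal < P1.asIdeal :=
    (PrimeSpectrum.asIdeal_lt_asIdeal _ _).mpr (p.strictMono (by simp [Fin.lt_def]))
  have h12 : P1.asIdeal < P2.asIdeal :=
    (PrimeSpectrum.asIdeal_lt_asIdeal _ _).mpr (p.strictMono (by simp [Fin.lt_def]))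
  haveI := P0.isPrime
  haveI := P1.isPrime
  haveI := P2.isPrime
  obtain ⟨x1, hx1J, hx1I⟩ := SetLike.exists_of_lt h01
  obtain ⟨x2, hx2J, hx2I⟩ := SetLike.exists_of_lt h12
  have c01 : Ideal.comap (algebraMap A R) P0.asIdeal <
      Ideal.comap (algebraMap A R) P1.asIdeal :=
    Ideal.comap_lt_comap_of_integral_mem_sdiff h01.le ⟨hx1J, hx1I⟩ (hint x1)
  have c12 : Ideal.comap (algebraMap A R) P1.asIdeal <
      Ideal.comap (algebraMap A R) P2.asIdeal :=
    Ideal.comap_lt_comap_of_integral_mem_sdiff h12.le ⟨hx2J, hx2I⟩ (hint x2)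
  -- pull back to k[X]
  set ρ : Polynomial k →+* A := ((Polynomial.aeval (R := k) f).rangeRestrict).toRingHom with hρ
  have hρsurj : Function.Surjective ρ := (Polynomial.aeval (R := k) f).rangeRestrict_surjective
  set r0 := Ideal.comap ρ (Ideal.comap (algebraMap A R) P0.asIdeal) with hr0
  set r1 := Ideal.comap ρ (Ideal.comap (algebraMap A R) P1.asIdeal) with hr1
  set r2 := Ideal.comap ρ (Ideal.comap (algebraMap A R) P2.asIdeal) with hr2
  have hr01 : r0 < r1 :=
    lt_of_le_of_ne (Ideal.comap_mono c01.le)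
      (fun h => c01.ne (Ideal.comap_injective_of_surjective ρ hρsurj h))
  have hr12 : r1 < r2 :=
    lt_of_le_of_ne (Ideal.comap_mono c12.le)
      (fun h => c12.ne (Ideal.comap_injective_of_surjective ρ hρsurj h))
  haveI hr1p : r1.IsPrime := by
    haveI : (Ideal.comap (algebraMap A R) P1.asIdeal).IsPrime := Ideal.IsPrime.comap _
    exact Ideal.IsPrime.comap _
  haveI hr2p : r2.IsPrime := by
    haveI : (Ideal.comap (algebraMap A R) P2.asIdeal).IsPrime := Ideal.IsPrime.comap _
    exact Ideal.IsPrime.comap _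
  have hr1bot : r1 ≠ ⊥ := ne_bot_of_gt hr01
  have hr1max : r1.IsMaximal := IsPrime.to_maximal_ideal hr1bot
  exact hr12.ne (hr1max.eq_of_le hr2p.ne_top hr12.le)
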